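/- Let $X_k \sim B(k,\beta)$ be binomial with $\beta \in (0,1)$, let $l \geq 1$ be a fixed integer, and set $s_0 = \beta k$. Then $\lim_{k\to\infty} s_0^{l/2} \sum_{s=0}^{k-l} (k-s)^{-l/2} P(X_k = s) = \left(\frac{\beta}{1-\beta}\right)^{l/2}$. -/

import Mathlib

open Finset Filter Topology

noncomputable def bb (β : ℝ) (k s : ℕ) : ℝ :=
  (Nat.choose k s : ℝ) * β ^ s * (1 - β) ^ (k - s)

lemma bb_nonneg {β : ℝ} (h0 : 0 ≤ β) (h1 : β ≤ 1) (k s : ℕ) : 0 ≤ bb β k s := by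
  have h : (0:ℝ) ≤ 1 - β := by linarith
  unfold bb; positivity

lemma bb_gen (β x : ℝ) (k : ℕ) :
    ∑ s ∈ range (k + 1), bb β k s * x ^ s = (β * x + (1 - β)) ^ k := by
  rw [add_pow]
  refine Finset.sum_congr rfl fun s hs => ?_
  unfold bb
  rw [mul_pow]
  ring

lemma bb_sum (β : ℝ) (k : ℕ) : ∑ s ∈ range (k + 1), bb β k s = 1 := by
  have h := bb_gen β 1 k
  simp at h
  simpa using h

lemma chernoff (β x t : ℝ) (hβ0 : 0 ≤ β) (hβ1 : β ≤ 1) (hx : 0 < x)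
    (k : ℕ) (P : ℕ → Prop) [DecidablePred P]
    (hP : ∀ s : ℕ, P s → 1 ≤ x ^ ((s:ℝ) - t)) :
    ∑ s ∈ range (k + 1), (if P s then bb β k s else 0)
      ≤ x ^ (-t) * (β * x + (1 - β)) ^ k := by
  rw [← bb_gen β x k, Finset.mul_sum]
  apply Finset.sum_le_sum
  intro s hs
  have hb := bb_nonneg hβ0 hβ1 k s
  have hxs : x ^ (-t) * (bb β k s * x ^ s) = x ^ ((s:ℝ) - t) * bb β k s := by
    rw [← Real.rpow_natCast x s, mul_comm (bb β k s), ← mul_assoc, ← Real.rpow_add hx]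
    rw [show -t + (s:ℝ) = (s:ℝ) - t by ring]
  rw [hxs]
  split_ifs with h
  · nlinarith [hP s h]
  · positivity

lemma exists_upper (β δ : ℝ) (hβ0 : 0 < β) (hδ : 0 < δ) :
    ∃ x : ℝ, 1 < x ∧ (β * x + (1 - β)) * x ^ (-(β + δ)) < 1 := by
  set f : ℝ → ℝ := fun x => (β * x + (1 - β)) * x ^ (-(β + δ)) with hf
  have hd : HasDerivAt f (-δ) 1 := by
    have h1 : HasDerivAt (fun x : ℝ => β * x + (1 - β)) β 1 := by
      simpa using ((hasDerivAt_id (1:ℝ)).const_mul β).add_const (1 - β)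
    have h2 : HasDerivAt (fun x : ℝ => x ^ (-(β + δ))) (-(β + δ) * (1:ℝ) ^ (-(β + δ) - 1)) 1 :=
      Real.hasDerivAt_rpow_const (Or.inl one_ne_zero)
    have h3 : HasDerivAt (fun x : ℝ => (β * x + (1 - β)) * x ^ (-(β + δ)))
        (β * 1 ^ (-(β + δ)) + (β * 1 + (1 - β)) * (-(β + δ) * 1 ^ (-(β + δ) - 1))) 1 :=
      h1.mul h2
    convert h3 using 1
    simp [Real.one_rpow]
    try ring
  rw [hasDerivAt_iff_tendsto_slope] at hd
  have h3 : ∀ᶠ z in 𝓝[>] (1:ℝ), slope f 1 z < 0 :=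
    Filter.Tendsto.eventually_lt_const (by linarith : -δ < (0:ℝ))
      (hd.mono_left (nhdsWithin_mono _ fun z hz => (Set.mem_Ioi.mp hz).ne'))
  have h4 : ∀ᶠ z in 𝓝[>] (1:ℝ), 1 < z := eventually_mem_nhdsWithin
  obtain ⟨z, hz1, hz2⟩ := (h3.and h4).exists
  refine ⟨z, hz2, ?_⟩
  have hf1 : f 1 = 1 := by simp [hf, Real.one_rpow]
  rw [slope_def_field, hf1] at hz1
  have hz3 : f z - 1 < 0 := by
    have h := mul_neg_of_neg_of_pos hz1 (by linarith : (0:ℝ) < z - 1)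
    rwa [div_mul_cancel₀ _ (by linarith : z - (1:ℝ) ≠ 0)] at h
  simpa [hf] using (by linarith : f z < 1)

lemma exists_lower (β δ : ℝ) (hβ0 : 0 < β) (hδ : 0 < δ) :
    ∃ y : ℝ, 0 < y ∧ y < 1 ∧ (β * y + (1 - β)) * y ^ (-(β - δ)) < 1 := by
  set f : ℝ → ℝ := fun x => (β * x + (1 - β)) * x ^ (-(β - δ)) with hf
  have hd : HasDerivAt f δ 1 := by
    have h1 : HasDerivAt (fun x : ℝ => β * x + (1 - β)) β 1 := by
      simpa using ((hasDerivAt_id (1:ℝ)).const_mul β).add_const (1 - β)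
    have h2 : HasDerivAt (fun x : ℝ => x ^ (-(β - δ))) (-(β - δ) * (1:ℝ) ^ (-(β - δ) - 1)) 1 :=
      Real.hasDerivAt_rpow_const (Or.inl one_ne_zero)
    have h3 : HasDerivAt (fun x : ℝ => (β * x + (1 - β)) * x ^ (-(β - δ)))
        (β * 1 ^ (-(β - δ)) + (β * 1 + (1 - β)) * (-(β - δ) * 1 ^ (-(β - δ) - 1))) 1 :=
      h1.mul h2
    convert h3 using 1
    simp [Real.one_rpow]
    try ring
  rw [hasDerivAt_iff_tendsto_slope] at hd
  have h3 : ∀ᶠ z in 𝓝[<] (1:ℝ), 0 < slope f 1 z :=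
    Filter.Tendsto.eventually_const_lt (by linarith : (0:ℝ) < δ)
      (hd.mono_left (nhdsWithin_mono _ fun z hz => (Set.mem_Iio.mp hz).ne))
  have h4 : ∀ᶠ z in 𝓝[<] (1:ℝ), z < 1 := eventually_mem_nhdsWithin
  have h5 : ∀ᶠ z in 𝓝[<] (1:ℝ), 0 < z :=
    (eventually_gt_nhds (by norm_num : (0:ℝ) < 1)).filter_mono nhdsWithin_le_nhds
  obtain ⟨z, ⟨hz1, hz4⟩, hz5⟩ := ((h3.and h4).and h5).exists
  refine ⟨z, hz5, hz4, ?_⟩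
  have hf1 : f 1 = 1 := by simp [hf, Real.one_rpow]
  rw [slope_def_field, hf1] at hz1
  have hz3 : f z - 1 < 0 := by
    have h := mul_neg_of_pos_of_neg hz1 (by linarith : z - (1:ℝ) < 0)
    rwa [div_mul_cancel₀ _ (by intro hc; rw [sub_eq_zero] at hc; exact hz4.ne hc : z - (1:ℝ) ≠ 0)] at h
  simpa [hf] using (by linarith : f z < 1)

lemma tail_upper (β δ x : ℝ) (hβ0 : 0 ≤ β) (hβ1 : β ≤ 1) (hx1 : 1 < x) (k : ℕ) :
    ∑ s ∈ range (k + 1), (if (β + δ) * k ≤ (s:ℝ) then bb β k s else 0)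
      ≤ ((β * x + (1 - β)) * x ^ (-(β + δ))) ^ k := by
  have hx0 : 0 < x := lt_trans one_pos hx1
  have h := chernoff β x ((β + δ) * k) hβ0 hβ1 hx0 k (fun s => (β + δ) * k ≤ (s:ℝ))
    (fun s hs => Real.one_le_rpow hx1.le (by linarith))
  refine h.trans (le_of_eq ?_)
  rw [mul_pow, show -((β + δ) * (k:ℝ)) = -(β + δ) * (k:ℝ) by ring,
    Real.rpow_mul hx0.le, Real.rpow_natCast, mul_comm]

lemma tail_lower (β δ y : ℝ) (hβ0 : 0 ≤ β) (hβ1 : β ≤ 1) (hy0 : 0 < y) (hy1 : y ≤ 1) (k : ℕ) :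
    ∑ s ∈ range (k + 1), (if ¬((β - δ) * k ≤ (s:ℝ)) then bb β k s else 0)
      ≤ ((β * y + (1 - β)) * y ^ (-(β - δ))) ^ k := by
  have h := chernoff β y ((β - δ) * k) hβ0 hβ1 hy0 k (fun s => ¬((β - δ) * k ≤ (s:ℝ)))
    (fun s hs => Real.one_le_rpow_of_pos_of_le_one_of_nonpos hy0 hy1 (by push_neg at hs; linarith))
  refine h.trans (le_of_eq ?_)
  rw [mul_pow, show -((β - δ) * (k:ℝ)) = -(β - δ) * (k:ℝ) by ring,
    Real.rpow_mul hy0.le, Real.rpow_natCast, mul_comm]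

lemma upper_bound (β δ : ℝ) (l : ℕ) (hl : 1 ≤ l) (hβ0 : 0 < β) (hβ1 : β < 1)
    (hδ0 : 0 < δ) (hδ1 : δ < 1 - β) (x : ℝ) (hx1 : 1 < x) (k : ℕ) (hkl : l ≤ k)
    (hk1 : 1 ≤ k) :
    (β * k) ^ ((l:ℝ)/2) * ∑ s ∈ range (k - l + 1), ((k:ℝ) - s) ^ (-(l:ℝ)/2) * bb β k s
      ≤ (β/(1-β-δ))^((l:ℝ)/2)
        + (β*k/(l:ℝ))^((l:ℝ)/2) * ((β * x + (1 - β)) * x ^ (-(β + δ))) ^ k := by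
  have hk0 : (0:ℝ) < k := by exact_mod_cast hk1
  have hl0 : (0:ℝ) < l := by exact_mod_cast hl
  have h1βδ : (0:ℝ) < 1 - β - δ := by linarith
  have hp0 : (0:ℝ) < (l:ℝ)/2 := by positivity
  set p := (l:ℝ)/2 with hp
  rw [Finset.mul_sum]
  have hterm : ∀ s ∈ range (k - l + 1),
      (β*k)^p * (((k:ℝ)-s) ^ (-(l:ℝ)/2) * bb β k s)
        ≤ (β/(1-β-δ))^p * bb β k s
          + (β*k/(l:ℝ))^p * (if (β+δ)*k ≤ (s:ℝ) then bb β k s else 0) := by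
    intro s hs
    have hsk : (s:ℝ) ≤ (k:ℝ) - l := by
      have h1 : s ≤ k - l := Nat.lt_succ_iff.mp (mem_range.mp hs)
      have h2 : (s:ℝ) ≤ ((k-l : ℕ):ℝ) := Nat.cast_le.mpr h1
      rwa [Nat.cast_sub hkl] at h2
    have hks : (0:ℝ) < (k:ℝ) - s := by linarith
    have hb := bb_nonneg hβ0.le hβ1.le k s
    have hkey : (β*k)^p * ((k:ℝ)-s)^(-(l:ℝ)/2) = (β*k/((k:ℝ)-s))^p := by
      rw [neg_div, ← hp, Real.rpow_neg hks.le, Real.div_rpow (by positivity) hks.le,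
        div_eq_mul_inv]
    rw [← mul_assoc, hkey]
    by_cases hcase : (β+δ)*k ≤ (s:ℝ)
    · rw [if_pos hcase]
      have hC0 : 0 ≤ (β/(1-β-δ))^p * bb β k s :=
        mul_nonneg (Real.rpow_nonneg (by positivity) _) hb
      have hratio : β*k/((k:ℝ)-s) ≤ β*k/(l:ℝ) := by
        rw [div_le_div_iff₀ hks hl0]
        nlinarith [mul_le_mul_of_nonneg_left (show (l:ℝ) ≤ (k:ℝ)-s by linarith)
          (show (0:ℝ) ≤ β*k by positivity)]
      have h2 : (β*k/((k:ℝ)-s))^p ≤ (β*k/(l:ℝ))^p :=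
        Real.rpow_le_rpow (by positivity) hratio hp0.le
      nlinarith [mul_le_mul_of_nonneg_right h2 hb]
    · rw [if_neg hcase]
      push_neg at hcase
      have hratio : β*k/((k:ℝ)-s) ≤ β/(1-β-δ) := by
        rw [div_le_div_iff₀ hks h1βδ]
        nlinarith
      have h2 : (β*k/((k:ℝ)-s))^p ≤ (β/(1-β-δ))^p :=
        Real.rpow_le_rpow (by positivity) hratio hp0.le
      rw [mul_zero, add_zero]
      exact mul_le_mul_of_nonneg_right h2 hb
  refine (Finset.sum_le_sum hterm).trans ?_
  rw [Finset.sum_add_distrib, ← Finset.mul_sum, ← Finset.mul_sum]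
  have hsub : range (k - l + 1) ⊆ range (k + 1) := by
    apply Finset.range_subset_range.mpr; omega
  have hs1 : ∑ s ∈ range (k - l + 1), bb β k s ≤ 1 := by
    rw [← bb_sum β k]
    exact Finset.sum_le_sum_of_subset_of_nonneg hsub
      (fun i _ _ => bb_nonneg hβ0.le hβ1.le k i)
  have hs2 : ∑ s ∈ range (k - l + 1), (if (β+δ)*k ≤ (s:ℝ) then bb β k s else 0)
      ≤ ((β * x + (1 - β)) * x ^ (-(β + δ))) ^ k := by
    refine (Finset.sum_le_sum_of_subset_of_nonneg hsub (fun i _ _ => ?_)).trans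
      (tail_upper β δ x hβ0.le hβ1.le hx1 k)
    split_ifs
    · exact bb_nonneg hβ0.le hβ1.le k i
    · exact le_rfl
  have hC0 : (0:ℝ) ≤ (β/(1-β-δ))^p := Real.rpow_nonneg (by positivity) _
  have hD0 : (0:ℝ) ≤ (β*k/(l:ℝ))^p := Real.rpow_nonneg (by positivity) _
  calc (β/(1-β-δ))^p * ∑ s ∈ range (k - l + 1), bb β k s
        + (β*k/(l:ℝ))^p * ∑ s ∈ range (k - l + 1), (if (β+δ)*k ≤ (s:ℝ) then bb β k s else 0)
      ≤ (β/(1-β-δ))^p * 1 + (β*k/(l:ℝ))^p * ((β * x + (1 - β)) * x ^ (-(β + δ))) ^ k := by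
        exact add_le_add (mul_le_mul_of_nonneg_left hs1 hC0) (mul_le_mul_of_nonneg_left hs2 hD0)
    _ = _ := by rw [mul_one]

lemma lower_bound (β δ : ℝ) (l : ℕ) (hl : 1 ≤ l) (hβ0 : 0 < β) (hβ1 : β < 1)
    (hδ0 : 0 < δ) (x y : ℝ) (hx1 : 1 < x) (hy0 : 0 < y) (hy1 : y < 1)
    (k : ℕ) (hkl : l ≤ k) (hk1 : 1 ≤ k) (hk2 : (β + δ) * k ≤ (k:ℝ) - l + 1) :
    (β/(1-β+δ))^((l:ℝ)/2)
        * (1 - ((β * y + (1 - β)) * y ^ (-(β - δ))) ^ k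
             - ((β * x + (1 - β)) * x ^ (-(β + δ))) ^ k)
      ≤ (β * k) ^ ((l:ℝ)/2) * ∑ s ∈ range (k - l + 1), ((k:ℝ) - s) ^ (-(l:ℝ)/2) * bb β k s := by
  have hk0 : (0:ℝ) < k := by exact_mod_cast hk1
  have hl0 : (0:ℝ) < l := by exact_mod_cast hl
  have h1βδ : (0:ℝ) < 1 - β + δ := by linarith
  have hp0 : (0:ℝ) < (l:ℝ)/2 := by positivity
  set p := (l:ℝ)/2 with hp
  have hC'0 : (0:ℝ) ≤ (β/(1-β+δ))^p := Real.rpow_nonneg (by positivity) _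
  -- step 1 : central mass is large
  have hsplit : ∀ f : ℕ → ℝ,
      ∑ s ∈ range (k + 1), f s
        = ∑ s ∈ range (k - l + 1), f s + ∑ s ∈ Ico (k - l + 1) (k + 1), f s := by
    intro f
    rw [Finset.range_eq_Ico, Finset.range_eq_Ico]
    exact (Finset.sum_Ico_consecutive f (n := k - l + 1) (k := k + 1) (Nat.zero_le _) (by omega)).symm
  have hstep1 :
      ∑ s ∈ range (k + 1), (if (β - δ) * k ≤ (s:ℝ) then bb β k s else 0)
          - ∑ s ∈ range (k + 1), (if (β + δ) * k ≤ (s:ℝ) then bb β k s else 0)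
        ≤ ∑ s ∈ range (k - l + 1), (if (β - δ) * k ≤ (s:ℝ) then bb β k s else 0) := by
    rw [hsplit (fun s => if (β - δ) * k ≤ (s:ℝ) then bb β k s else 0),
      hsplit (fun s => if (β + δ) * k ≤ (s:ℝ) then bb β k s else 0)]
    have h1 : ∑ s ∈ Ico (k - l + 1) (k + 1), (if (β - δ) * k ≤ (s:ℝ) then bb β k s else 0)
        ≤ ∑ s ∈ Ico (k - l + 1) (k + 1), (if (β + δ) * k ≤ (s:ℝ) then bb β k s else 0) := by
      apply Finset.sum_le_sum
      intro s hs
      have hs1 : k - l + 1 ≤ s := (Finset.mem_Ico.mp hs).1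
      have hs2 : (β + δ) * k ≤ (s:ℝ) := by
        refine hk2.trans ?_
        have : ((k - l + 1 : ℕ) : ℝ) ≤ (s:ℝ) := Nat.cast_le.mpr hs1
        rw [Nat.cast_add, Nat.cast_sub hkl] at this
        push_cast at this ⊢
        linarith
      rw [if_pos hs2]
      split_ifs
      · exact le_rfl
      · exact bb_nonneg hβ0.le hβ1.le k s
    have h2 : (0:ℝ) ≤ ∑ s ∈ range (k - l + 1), (if (β + δ) * k ≤ (s:ℝ) then bb β k s else 0) := by
      apply Finset.sum_nonneg
      intro s _
      split_ifs
      · exact bb_nonneg hβ0.le hβ1.le k s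
      · exact le_rfl
    linarith
  have hstep2 : 1 - ((β * y + (1 - β)) * y ^ (-(β - δ))) ^ k
      ≤ ∑ s ∈ range (k + 1), (if (β - δ) * k ≤ (s:ℝ) then bb β k s else 0) := by
    have hsum : ∑ s ∈ range (k + 1), (if (β - δ) * k ≤ (s:ℝ) then bb β k s else 0)
        + ∑ s ∈ range (k + 1), (if ¬((β - δ) * k ≤ (s:ℝ)) then bb β k s else 0) = 1 := by
      rw [← Finset.sum_add_distrib, ← bb_sum β k]
      apply Finset.sum_congr rfl
      intro s _
      split_ifs <;> ring
    have := tail_lower β δ y hβ0.le hβ1.le hy0 hy1.le k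
    linarith
  have hstep3 : 1 - ((β * y + (1 - β)) * y ^ (-(β - δ))) ^ k
        - ((β * x + (1 - β)) * x ^ (-(β + δ))) ^ k
      ≤ ∑ s ∈ range (k - l + 1), (if (β - δ) * k ≤ (s:ℝ) then bb β k s else 0) := by
    have := tail_upper β δ x hβ0.le hβ1.le hx1 k
    linarith
  -- step 2 : termwise bound
  rw [Finset.mul_sum]
  have hterm : ∀ s ∈ range (k - l + 1),
      (β/(1-β+δ))^p * (if (β - δ) * k ≤ (s:ℝ) then bb β k s else 0)
        ≤ (β*k)^p * (((k:ℝ)-s) ^ (-(l:ℝ)/2) * bb β k s) := by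
    intro s hs
    have hsk : (s:ℝ) ≤ (k:ℝ) - l := by
      have h1 : s ≤ k - l := Nat.lt_succ_iff.mp (mem_range.mp hs)
      have h2 : (s:ℝ) ≤ ((k-l : ℕ):ℝ) := Nat.cast_le.mpr h1
      rwa [Nat.cast_sub hkl] at h2
    have hks : (0:ℝ) < (k:ℝ) - s := by linarith
    have hb := bb_nonneg hβ0.le hβ1.le k s
    have hkey : (β*k)^p * ((k:ℝ)-s)^(-(l:ℝ)/2) = (β*k/((k:ℝ)-s))^p := by
      rw [neg_div, ← hp, Real.rpow_neg hks.le, Real.div_rpow (by positivity) hks.le,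
        div_eq_mul_inv]
    rw [← mul_assoc, hkey]
    split_ifs with hcase
    · have hratio : β/(1-β+δ) ≤ β*k/((k:ℝ)-s) := by
        rw [div_le_div_iff₀ h1βδ hks]
        nlinarith
      exact mul_le_mul_of_nonneg_right
        (Real.rpow_le_rpow (by positivity) hratio hp0.le) hb
    · have : (0:ℝ) ≤ (β*k/((k:ℝ)-s))^p := Real.rpow_nonneg (by positivity) _
      nlinarith
  calc (β/(1-β+δ))^p * (1 - ((β * y + (1 - β)) * y ^ (-(β - δ))) ^ k
             - ((β * x + (1 - β)) * x ^ (-(β + δ))) ^ k)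
      ≤ (β/(1-β+δ))^p
          * ∑ s ∈ range (k - l + 1), (if (β - δ) * k ≤ (s:ℝ) then bb β k s else 0) :=
        mul_le_mul_of_nonneg_left hstep3 hC'0
    _ = ∑ s ∈ range (k - l + 1),
          (β/(1-β+δ))^p * (if (β - δ) * k ≤ (s:ℝ) then bb β k s else 0) := Finset.mul_sum _ _ _
    _ ≤ _ := Finset.sum_le_sum hterm


theorem binomial_weighted_concentration (β : ℝ) (hβ : β ∈ Set.Ioo (0 : ℝ) 1)
    (l : ℕ) (hl : 1 ≤ l) :
    Tendsto (fun k : ℕ =>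
        (β * k) ^ ((l : ℝ) / 2) *
          ∑ s ∈ Finset.range (k - l + 1),
            ((k : ℝ) - s) ^ (-(l : ℝ) / 2) *
              ((Nat.choose k s : ℝ) * β ^ s * (1 - β) ^ (k - s)))
      atTop (nhds ((β / (1 - β)) ^ ((l : ℝ) / 2))) := by
  obtain ⟨hβ0, hβ1⟩ := hβ
  have h1β : (0:ℝ) < 1 - β := by linarith
  have hl0 : (0:ℝ) < l := by exact_mod_cast hl
  have hp0 : (0:ℝ) < (l:ℝ)/2 := by positivity
  rw [Metric.tendsto_nhds]
  intro ε hε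
  -- choose δ
  have hb1 : ContinuousAt (fun d : ℝ => β / (1 - β - d)) 0 := by
    apply ContinuousAt.div continuousAt_const
    · exact (continuous_const.sub continuous_id).continuousAt
    · simpa using h1β.ne'
  have hb2 : ContinuousAt (fun d : ℝ => β / (1 - β + d)) 0 := by
    apply ContinuousAt.div continuousAt_const
    · exact (continuous_const.add continuous_id).continuousAt
    · simpa using h1β.ne'
  have hcont1 : ContinuousAt (fun d : ℝ => (β / (1 - β - d)) ^ ((l:ℝ)/2)) 0 :=
    hb1.rpow_const (Or.inr hp0.le)
  have hcont2 : ContinuousAt (fun d : ℝ => (β / (1 - β + d)) ^ ((l:ℝ)/2)) 0 :=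
    hb2.rpow_const (Or.inr hp0.le)
  have hv1 : (β/(1-β-0)) ^ ((l:ℝ)/2) < (β / (1 - β)) ^ ((l : ℝ) / 2) + ε := by
    rw [sub_zero]; linarith
  have hv2 : (β / (1 - β)) ^ ((l : ℝ) / 2) - ε < (β/(1-β+0)) ^ ((l:ℝ)/2) := by
    rw [add_zero]; linarith
  have hev1 : ∀ᶠ d in 𝓝 (0:ℝ),
      (β/(1-β-d)) ^ ((l:ℝ)/2) < (β / (1 - β)) ^ ((l : ℝ) / 2) + ε :=
    Filter.Tendsto.eventually_lt_const hv1 hcont1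
  have hev2 : ∀ᶠ d in 𝓝 (0:ℝ),
      (β / (1 - β)) ^ ((l : ℝ) / 2) - ε < (β/(1-β+d)) ^ ((l:ℝ)/2) :=
    Filter.Tendsto.eventually_const_lt hv2 hcont2
  have hev3 : ∀ᶠ d in 𝓝 (0:ℝ), d < 1 - β := eventually_lt_nhds h1β
  have hcomb := (((hev1.and hev2).and hev3).filter_mono
    (nhdsWithin_le_nhds (s := Set.Ioi (0:ℝ)))).and eventually_mem_nhdsWithin
  obtain ⟨δ, ⟨⟨hC, hC'⟩, hδ1⟩, hδmem⟩ := hcomb.exists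
  have hδ0 : 0 < δ := Set.mem_Ioi.mp hδmem
  obtain ⟨x, hx1, hρ⟩ := exists_upper β δ hβ0 hδ0
  obtain ⟨y, hy0, hy1, hρ'⟩ := exists_lower β δ hβ0 hδ0
  have hx0 : (0:ℝ) < x := lt_trans one_pos hx1
  have hρ0 : 0 ≤ (β * x + (1 - β)) * x ^ (-(β + δ)) :=
    mul_nonneg (by nlinarith) (Real.rpow_nonneg hx0.le _)
  have hρ'0 : 0 ≤ (β * y + (1 - β)) * y ^ (-(β - δ)) :=
    mul_nonneg (by nlinarith) (Real.rpow_nonneg hy0.le _)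
  -- polynomial times geometric tends to zero
  have hM : Tendsto (fun k : ℕ => (β*k/(l:ℝ)) ^ ((l:ℝ)/2)
      * ((β * x + (1 - β)) * x ^ (-(β + δ))) ^ k) atTop (𝓝 0) := by
    have hgeo : Tendsto (fun k : ℕ => (k:ℝ)^l * ((β * x + (1 - β)) * x ^ (-(β + δ))) ^ k)
        atTop (𝓝 0) :=
      (summable_pow_mul_geometric_of_norm_lt_one (R := ℝ) l
        (by rwa [Real.norm_eq_abs, abs_of_nonneg hρ0])).tendsto_atTop_zero
    have hgeo2 : Tendsto (fun k : ℕ =>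
        (β/(l:ℝ))^l * ((k:ℝ)^l * ((β * x + (1 - β)) * x ^ (-(β + δ))) ^ k)) atTop (𝓝 0) := by
      simpa using hgeo.const_mul ((β/(l:ℝ))^l)
    apply squeeze_zero' ?_ ?_ hgeo2
    · filter_upwards with k
      have := pow_nonneg hρ0 k
      positivity
    · filter_upwards [Filter.Tendsto.eventually_ge_atTop tendsto_natCast_atTop_atTop
        ((l:ℝ)/β)] with k hk
      have h1 : (1:ℝ) ≤ β*k/(l:ℝ) := by
        rw [le_div_iff₀ hl0, one_mul]
        rw [div_le_iff₀ hβ0] at hk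
        linarith
      have h2 : (β*k/(l:ℝ)) ^ ((l:ℝ)/2) ≤ (β*k/(l:ℝ)) ^ ((l:ℝ)) :=
        Real.rpow_le_rpow_of_exponent_le h1 (by linarith)
      have h3 : (β*(k:ℝ)/(l:ℝ)) ^ ((l:ℝ)) = (β/(l:ℝ))^l * (k:ℝ)^l := by
        rw [Real.rpow_natCast, mul_div_right_comm, mul_pow]
      calc (β*k/(l:ℝ)) ^ ((l:ℝ)/2) * ((β * x + (1 - β)) * x ^ (-(β + δ))) ^ k
          ≤ (β*k/(l:ℝ)) ^ ((l:ℝ)) * ((β * x + (1 - β)) * x ^ (-(β + δ))) ^ k :=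
            mul_le_mul_of_nonneg_right h2 (pow_nonneg hρ0 k)
        _ = (β/(l:ℝ))^l * ((k:ℝ)^l * ((β * x + (1 - β)) * x ^ (-(β + δ))) ^ k) := by
            rw [h3]; ring
  have hU : Tendsto (fun k : ℕ => (β/(1-β-δ)) ^ ((l:ℝ)/2) + (β*k/(l:ℝ)) ^ ((l:ℝ)/2)
      * ((β * x + (1 - β)) * x ^ (-(β + δ))) ^ k) atTop (𝓝 ((β/(1-β-δ)) ^ ((l:ℝ)/2))) := by
    simpa using tendsto_const_nhds.add hM
  have hUev := Filter.Tendsto.eventually_lt_const hC hU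
  have hgeoρ : Tendsto (fun k : ℕ => ((β * x + (1 - β)) * x ^ (-(β + δ))) ^ k) atTop (𝓝 0) :=
    tendsto_pow_atTop_nhds_zero_of_lt_one hρ0 hρ
  have hgeoρ' : Tendsto (fun k : ℕ => ((β * y + (1 - β)) * y ^ (-(β - δ))) ^ k) atTop (𝓝 0) :=
    tendsto_pow_atTop_nhds_zero_of_lt_one hρ'0 hρ'
  have hLo : Tendsto (fun k : ℕ => (β/(1-β+δ)) ^ ((l:ℝ)/2)
      * (1 - ((β * y + (1 - β)) * y ^ (-(β - δ))) ^ k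
           - ((β * x + (1 - β)) * x ^ (-(β + δ))) ^ k)) atTop
      (𝓝 ((β/(1-β+δ)) ^ ((l:ℝ)/2) * (1 - 0 - 0))) :=
    Filter.Tendsto.const_mul _ ((tendsto_const_nhds.sub hgeoρ').sub hgeoρ)
  have hLoev := Filter.Tendsto.eventually_const_lt
    (by simpa using hC') hLo
  have hk2ev : ∀ᶠ k : ℕ in atTop, (β+δ)*k ≤ (k:ℝ) - l + 1 := by
    have h1βδ : (0:ℝ) < 1 - β - δ := by linarith
    filter_upwards [Filter.Tendsto.eventually_ge_atTop tendsto_natCast_atTop_atTop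
      (((l:ℝ)-1)/(1-β-δ))] with k hk
    rw [div_le_iff₀ h1βδ] at hk
    nlinarith
  filter_upwards [hUev, hLoev, hk2ev, eventually_ge_atTop l, eventually_ge_atTop 1]
    with k h1 h2 h3 h4 h5
  have hub := upper_bound β δ l hl hβ0 hβ1 hδ0 hδ1 x hx1 k h4 h5
  have hlb := lower_bound β δ l hl hβ0 hβ1 hδ0 x y hx1 hy0 hy1 k h4 h5 h3
  show dist ((β * k) ^ ((l:ℝ)/2) * ∑ s ∈ range (k - l + 1),
      ((k:ℝ) - s) ^ (-(l:ℝ)/2) * bb β k s) ((β / (1 - β)) ^ ((l : ℝ) / 2)) < ε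
  rw [Real.dist_eq, abs_sub_lt_iff]
  constructor <;> linarith
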